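/- Assume α > 1 and 0 < p, q ≤ 1. Then every positive solution (x_n, y_n) of the system converges to the equilibrium (α+1, α+1): lim_{n→∞} x_n = α+1 and lim_{n→∞} y_n = α+1. -/

import Mathlib

open Filter

private lemma aux_rpow_le (e t C : ℝ) (he : 0 < e) (he1 : e ≤ 1) (ht : 0 < t)
    (hC : 1 ≤ C) (htC : t ≤ C) : t ^ e ≤ C := by
  rcases le_total t 1 with h | h
  · exact le_trans (Real.rpow_le_one ht.le h he.le) hC
  · calc t ^ e ≤ t ^ (1:ℝ) := Real.rpow_le_rpow_of_exponent_le h he1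
      _ = t := Real.rpow_one t
      _ ≤ C := htC

private lemma aux_le_rpow (e t c : ℝ) (he : 0 < e) (he1 : e ≤ 1) (ht : 0 < t)
    (hc : c ≤ 1) (hct : c ≤ t) : c ≤ t ^ e := by
  rcases le_total t 1 with h | h
  · calc c ≤ t := hct
      _ = t ^ (1:ℝ) := (Real.rpow_one t).symm
      _ ≤ t ^ e := Real.rpow_le_rpow_of_exponent_ge ht h he1
  · calc c ≤ 1 := hc
      _ = t ^ (0:ℝ) := (Real.rpow_zero t).symm
      _ ≤ t ^ e := Real.rpow_le_rpow_of_exponent_le h he.le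

private noncomputable def phi (α R : ℝ) : ℝ := (α + R) / (α + 1 / R)

private noncomputable def Rseq (α : ℝ) : ℕ → ℝ
  | 0 => (α + 3) / α
  | k + 1 => phi α (Rseq α k)

private lemma phi_ge_one (α R : ℝ) (hα : 1 < α) (hR : 1 ≤ R) : 1 ≤ phi α R := by
  have hR0 : (0:ℝ) < R := by linarith
  have h0 : 0 < 1 / R := by positivity
  have h1 : 1 / R ≤ 1 := by rw [div_le_one hR0]; exact hR
  rw [phi, le_div_iff₀ (by linarith)]
  linarith

private lemma phi_contract (α R : ℝ) (hα : 1 < α) (hR : 1 ≤ R) :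
    phi α R - 1 ≤ 2 / (α + 1) * (R - 1) := by
  have hR0 : (0:ℝ) < R := by linarith
  have hu : (1 / R) * R = 1 := by field_simp
  have h0 : 0 < 1 / R := by positivity
  have h1 : 1 / R ≤ 1 := by rw [div_le_one hR0]; exact hR
  have h4 : 0 ≤ 1 / R + R - 2 := by
    rw [div_add' _ _ _ (ne_of_gt hR0), div_sub' (ne_of_gt hR0),
      le_div_iff₀ hR0]
    nlinarith [sq_nonneg (R - 1)]
  have key : phi α R ≤ (α + 2 * R - 1) / (α + 1) := by
    rw [phi, div_le_div_iff₀ (by linarith) (by linarith)]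
    nlinarith [mul_nonneg (by linarith : (0:ℝ) ≤ α - 1) h4, hu]
  have heq : (α + 2 * R - 1) / (α + 1) - 1 = 2 / (α + 1) * (R - 1) := by
    field_simp
    ring
  linarith

theorem global_attractor (α p q : ℝ) (hα : 1 < α) (hp : 0 < p) (hp1 : p ≤ 1)
    (hq : 0 < q) (hq1 : q ≤ 1)
    (x y : ℤ → ℝ)
    (hx0 : ∀ n : ℤ, -2 ≤ n → 0 < x n) (hy0 : ∀ n : ℤ, -2 ≤ n → 0 < y n)
    (hx : ∀ n : ℤ, 0 ≤ n → x (n + 1) = α + y n ^ p / y (n - 2) ^ p)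
    (hy : ∀ n : ℤ, 0 ≤ n → y (n + 1) = α + x n ^ q / x (n - 2) ^ q) :
    Tendsto x atTop (nhds (α + 1)) ∧ Tendsto y atTop (nhds (α + 1)) := by
  have hα0 : (0:ℝ) < α := by linarith
  -- rewritten recurrences
  have hx' : ∀ m : ℤ, 1 ≤ m → x m = α + (y (m-1) / y (m-3)) ^ p := by
    intro m hm
    have h := hx (m - 1) (by omega)
    rw [show m - 1 + 1 = m from by ring, show m - 1 - 2 = m - 3 from by ring] at h
    rw [h, Real.div_rpow (hy0 (m-1) (by omega)).le (hy0 (m-3) (by omega)).le]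
  have hy' : ∀ m : ℤ, 1 ≤ m → y m = α + (x (m-1) / x (m-3)) ^ q := by
    intro m hm
    have h := hy (m - 1) (by omega)
    rw [show m - 1 + 1 = m from by ring, show m - 1 - 2 = m - 3 from by ring] at h
    rw [h, Real.div_rpow (hx0 (m-1) (by omega)).le (hx0 (m-3) (by omega)).le]
  -- solutions exceed α from index 1 onwards
  have hxα : ∀ m : ℤ, 1 ≤ m → α < x m := by
    intro m hm
    rw [hx' m hm]
    have : 0 < (y (m-1) / y (m-3)) ^ p :=
      Real.rpow_pos_of_pos (div_pos (hy0 _ (by omega)) (hy0 _ (by omega))) p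
    linarith
  have hyα : ∀ m : ℤ, 1 ≤ m → α < y m := by
    intro m hm
    rw [hy' m hm]
    have : 0 < (x (m-1) / x (m-3)) ^ q :=
      Real.rpow_pos_of_pos (div_pos (hx0 _ (by omega)) (hx0 _ (by omega))) q
    linarith
  -- first crude upper bounds
  have hxu : ∀ m : ℤ, 4 ≤ m → x m ≤ α + y (m-1) := by
    intro m hm
    rw [hx' m (by omega)]
    have h3 : 1 < y (m-3) := lt_trans hα (hyα (m-3) (by omega))
    have h1 : 1 < y (m-1) := lt_trans hα (hyα (m-1) (by omega))
    have ht : 0 < y (m-1) / y (m-3) := div_pos (by linarith) (by linarith)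
    have htC : y (m-1) / y (m-3) ≤ y (m-1) := by
      rw [div_le_iff₀ (by linarith)]
      nlinarith
    have := aux_rpow_le p _ _ hp hp1 ht h1.le htC
    linarith
  have hyu : ∀ m : ℤ, 4 ≤ m → y m ≤ α + x (m-1) := by
    intro m hm
    rw [hy' m (by omega)]
    have h3 : 1 < x (m-3) := lt_trans hα (hxα (m-3) (by omega))
    have h1 : 1 < x (m-1) := lt_trans hα (hxα (m-1) (by omega))
    have ht : 0 < x (m-1) / x (m-3) := div_pos (by linarith) (by linarith)
    have htC : x (m-1) / x (m-3) ≤ x (m-1) := by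
      rw [div_le_iff₀ (by linarith)]
      nlinarith
    have := aux_le_rpow  -- dummy to keep style
    have := aux_rpow_le q _ _ hq hq1 ht h1.le htC
    linarith
  -- absolute upper bound
  have hxb : ∀ m : ℤ, 6 ≤ m → x m ≤ α + 3 := by
    intro m hm
    rw [hx' m (by omega)]
    have h3 : α < y (m-3) := hyα _ (by omega)
    have h1 : 0 < y (m-1) := hy0 _ (by omega)
    have hy1 : y (m-1) ≤ α + x (m-2) := by
      have := hyu (m-1) (by omega)
      rwa [show m - 1 - 1 = m - 2 from by ring] at this
    have hx2 : x (m-2) ≤ α + y (m-3) := by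
      have := hxu (m-2) (by omega)
      rwa [show m - 2 - 1 = m - 3 from by ring] at this
    have hr : y (m-1) / y (m-3) ≤ 3 := by
      rw [div_le_iff₀ (by linarith)]
      linarith
    have := aux_rpow_le p _ 3 hp hp1 (div_pos h1 (by linarith)) (by norm_num) hr
    linarith
  have hyb : ∀ m : ℤ, 6 ≤ m → y m ≤ α + 3 := by
    intro m hm
    rw [hy' m (by omega)]
    have h3 : α < x (m-3) := hxα _ (by omega)
    have h1 : 0 < x (m-1) := hx0 _ (by omega)
    have hy1 : x (m-1) ≤ α + y (m-2) := by
      have := hxu (m-1) (by omega)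
      rwa [show m - 1 - 1 = m - 2 from by ring] at this
    have hx2 : y (m-2) ≤ α + x (m-3) := by
      have := hyu (m-2) (by omega)
      rwa [show m - 2 - 1 = m - 3 from by ring] at this
    have hr : x (m-1) / x (m-3) ≤ 3 := by
      rw [div_le_iff₀ (by linarith)]
      linarith
    have := aux_rpow_le q _ 3 hq hq1 (div_pos h1 (by linarith)) (by norm_num) hr
    linarith
  -- initial ratio bounds at N = 8
  have hGood0 : ∀ m : ℤ, 8 ≤ m →
      (1/((α+3)/α) ≤ x m / x (m-2) ∧ x m / x (m-2) ≤ (α+3)/α) ∧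
      (1/((α+3)/α) ≤ y m / y (m-2) ∧ y m / y (m-2) ≤ (α+3)/α) := by
    intro m hm
    have e : 1/((α+3)/α) = α/(α+3) := one_div_div _ _
    have hxm : α < x m := hxα _ (by omega)
    have hxm2 : α < x (m-2) := hxα _ (by omega)
    have hym : α < y m := hyα _ (by omega)
    have hym2 : α < y (m-2) := hyα _ (by omega)
    have hxmb : x m ≤ α + 3 := hxb _ (by omega)
    have hxm2b : x (m-2) ≤ α + 3 := hxb _ (by omega)
    have hymb : y m ≤ α + 3 := hyb _ (by omega)
    have hym2b : y (m-2) ≤ α + 3 := hyb _ (by omega)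
    rw [e]
    exact ⟨⟨div_le_div₀ (by linarith) hxm.le (by linarith) hxm2b,
            div_le_div₀ (by linarith) hxmb (by linarith) hxm2.le⟩,
           ⟨div_le_div₀ (by linarith) hym.le (by linarith) hym2b,
            div_le_div₀ (by linarith) hymb (by linarith) hym2.le⟩⟩
  -- from ratio bounds to value bounds
  have xbound : ∀ (R : ℝ) (N : ℤ), 1 ≤ R → 0 ≤ N →
      (∀ m : ℤ, N ≤ m → (1/R ≤ x m / x (m-2) ∧ x m / x (m-2) ≤ R) ∧
        (1/R ≤ y m / y (m-2) ∧ y m / y (m-2) ≤ R)) →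
      ∀ m : ℤ, N + 1 ≤ m → α + 1/R ≤ x m ∧ x m ≤ α + R := by
    intro R N hR hN hG m hm
    have hG1 := (hG (m-1) (by omega)).2
    rw [show m - 1 - 2 = m - 3 from by ring] at hG1
    have ht : 0 < y (m-1) / y (m-3) := div_pos (hy0 _ (by omega)) (hy0 _ (by omega))
    have h1R : 1/R ≤ 1 := by rw [div_le_one (by linarith)]; exact hR
    have hu := aux_rpow_le p _ R hp hp1 ht hR hG1.2
    have hl := aux_le_rpow p _ (1/R) hp hp1 ht h1R hG1.1
    rw [hx' m (by omega)]
    constructor <;> linarith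
  have ybound : ∀ (R : ℝ) (N : ℤ), 1 ≤ R → 0 ≤ N →
      (∀ m : ℤ, N ≤ m → (1/R ≤ x m / x (m-2) ∧ x m / x (m-2) ≤ R) ∧
        (1/R ≤ y m / y (m-2) ∧ y m / y (m-2) ≤ R)) →
      ∀ m : ℤ, N + 1 ≤ m → α + 1/R ≤ y m ∧ y m ≤ α + R := by
    intro R N hR hN hG m hm
    have hG1 := (hG (m-1) (by omega)).1
    rw [show m - 1 - 2 = m - 3 from by ring] at hG1
    have ht : 0 < x (m-1) / x (m-3) := div_pos (hx0 _ (by omega)) (hx0 _ (by omega))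
    have h1R : 1/R ≤ 1 := by rw [div_le_one (by linarith)]; exact hR
    have hu := aux_rpow_le q _ R hq hq1 ht hR hG1.2
    have hl := aux_le_rpow q _ (1/R) hq hq1 ht h1R hG1.1
    rw [hy' m (by omega)]
    constructor <;> linarith
  -- the contraction step
  have step : ∀ (R : ℝ) (N : ℤ), 1 ≤ R → 0 ≤ N →
      (∀ m : ℤ, N ≤ m → (1/R ≤ x m / x (m-2) ∧ x m / x (m-2) ≤ R) ∧
        (1/R ≤ y m / y (m-2) ∧ y m / y (m-2) ≤ R)) →
      ∀ m : ℤ, N + 3 ≤ m →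
        (1/(phi α R) ≤ x m / x (m-2) ∧ x m / x (m-2) ≤ phi α R) ∧
        (1/(phi α R) ≤ y m / y (m-2) ∧ y m / y (m-2) ≤ phi α R) := by
    intro R N hR hN hG m hm
    have hR0 : (0:ℝ) < R := by linarith
    have h1R : 0 < 1/R := by positivity
    obtain ⟨ha1, ha2⟩ := xbound R N hR hN hG m (by omega)
    obtain ⟨hb1, hb2⟩ := xbound R N hR hN hG (m-2) (by omega)
    obtain ⟨hc1, hc2⟩ := ybound R N hR hN hG m (by omega)
    obtain ⟨hd1, hd2⟩ := ybound R N hR hN hG (m-2) (by omega)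
    have e : 1/(phi α R) = (α + 1/R)/(α + R) := by rw [phi, one_div_div]
    rw [e, phi]
    exact ⟨⟨div_le_div₀ (by linarith) ha1 (by linarith) hb2,
            div_le_div₀ (by linarith) ha2 (by linarith) hb1⟩,
           ⟨div_le_div₀ (by linarith) hc1 (by linarith) hd2,
            div_le_div₀ (by linarith) hc2 (by linarith) hd1⟩⟩
  -- main induction
  have hmain : ∀ k : ℕ, 1 ≤ Rseq α k ∧
      Rseq α k - 1 ≤ (2/(α+1))^k * (3/α) ∧
      ∀ m : ℤ, 8 + 3*(k:ℤ) ≤ m →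
        (1/(Rseq α k) ≤ x m / x (m-2) ∧ x m / x (m-2) ≤ Rseq α k) ∧
        (1/(Rseq α k) ≤ y m / y (m-2) ∧ y m / y (m-2) ≤ Rseq α k) := by
    intro k
    induction k with
    | zero =>
      refine ⟨?_, ?_, ?_⟩
      · show (1:ℝ) ≤ (α + 3)/α
        rw [le_div_iff₀ hα0]; linarith
      · show (α + 3)/α - 1 ≤ (2/(α+1))^0 * (3/α)
        rw [pow_zero, one_mul]
        have : (α + 3)/α - 1 = 3/α := by field_simp; ring
        linarith
      · intro m hm
        exact hGood0 m (by omega)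
    | succ k ih =>
      obtain ⟨ih1, ih2, ih3⟩ := ih
      have hphi1 : 1 ≤ Rseq α (k+1) := phi_ge_one α (Rseq α k) hα ih1
      refine ⟨hphi1, ?_, ?_⟩
      · have h := phi_contract α (Rseq α k) hα ih1
        have hc0 : (0:ℝ) ≤ 2/(α+1) := by positivity
        calc Rseq α (k+1) - 1 = phi α (Rseq α k) - 1 := rfl
          _ ≤ 2/(α+1) * (Rseq α k - 1) := h
          _ ≤ 2/(α+1) * ((2/(α+1))^k * (3/α)) := mul_le_mul_of_nonneg_left ih2 hc0
          _ = (2/(α+1))^(k+1) * (3/α) := by ring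
      · intro m hm
        have := step (Rseq α k) (8 + 3*(k:ℤ)) ih1 (by positivity) ih3 m
          (by push_cast at hm ⊢; omega)
        exact this
  -- final convergence estimate
  have final : ∀ ε : ℝ, 0 < ε → ∃ N : ℤ, ∀ m : ℤ, N ≤ m →
      |x m - (α+1)| < ε ∧ |y m - (α+1)| < ε := by
    intro ε hε
    have hc1 : 2/(α+1) < 1 := by rw [div_lt_one (by linarith)]; linarith
    obtain ⟨k, hk⟩ := exists_pow_lt_of_lt_one (show (0:ℝ) < ε * α / 3 by positivity) hc1
    obtain ⟨h1, h2, hG⟩ := hmain k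
    have hRk : Rseq α k - 1 < ε := by
      have h3 : (2/(α+1))^k * (3/α) < (ε * α / 3) * (3/α) :=
        mul_lt_mul_of_pos_right hk (by positivity)
      have h4 : (ε * α / 3) * (3/α) = ε := by field_simp
      linarith
    refine ⟨8 + 3*(k:ℤ) + 1, fun m hm => ?_⟩
    have hR0 : (0:ℝ) < Rseq α k := by linarith
    have hx1 := xbound (Rseq α k) (8 + 3*(k:ℤ)) h1 (by positivity) hG m (by omega)
    have hy1 := ybound (Rseq α k) (8 + 3*(k:ℤ)) h1 (by positivity) hG m (by omega)
    have hkey : 2 - Rseq α k ≤ 1/(Rseq α k) := by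
      rw [le_div_iff₀ hR0]
      nlinarith [sq_nonneg (Rseq α k - 1)]
    constructor
    · rw [abs_lt]
      constructor <;> [linarith [hx1.1]; linarith [hx1.2]]
    · rw [abs_lt]
      constructor <;> [linarith [hy1.1]; linarith [hy1.2]]
  constructor <;> rw [Metric.tendsto_atTop] <;> intro ε hε <;>
    obtain ⟨N, hN⟩ := final ε hε
  · exact ⟨N, fun n hn => by rw [Real.dist_eq]; exact (hN n hn).1⟩
  · exact ⟨N, fun n hn => by rw [Real.dist_eq]; exact (hN n hn).2⟩
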